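/- Let C be a convex subset of the plane ℝ² (EuclideanSpace ℝ (Fin 2)), let v_A, v_B ∈ ℝ², set x = v_A − v_B, and suppose there is r > 0 with closedBall(x, r) ⊆ C and a point p ∈ frontier C with dist(x, p) = r. Let u = p − x. If the new velocities v_A', v_B' satisfy the reciprocal half-plane constraints ⟪v_A' − (v_A + (1/2)•u), u⟫ ≥ 0 and ⟪v_B' − (v_B − (1/2)•u), u⟫ ≤ 0 (each agent takes half the responsibility u/2), then ⟪(v_A' − v_B') − p, u⟫ ≥ 0, and hence the new relative velocity v_A' − v_B' does not lie in the interior of C. -/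

import Mathlib

open Metric
set_option maxHeartbeats 1000000

/-- If both agents satisfy their reciprocal half-plane constraints (each taking half of
the responsibility `u = p - (v_A - v_B)`), then the new relative velocity satisfies
`⟪(v_A' - v_B') - p, u⟫ ≥ 0` and does not lie in the interior of the convex velocity
obstacle region `C`. -/
theorem reciprocal_halfplane_constraints_avoid_obstacle
    (C : Set (EuclideanSpace ℝ (Fin 2))) (hC : Convex ℝ C)
    (vA vB : EuclideanSpace ℝ (Fin 2))
    (x : EuclideanSpace ℝ (Fin 2)) (hx : x = vA - vB)
    (r : ℝ) (hr : 0 < r) (hball : closedBall x r ⊆ C)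
    (p : EuclideanSpace ℝ (Fin 2)) (hp : p ∈ frontier C) (hd : dist x p = r)
    (u : EuclideanSpace ℝ (Fin 2)) (hu : u = p - x)
    (vA' vB' : EuclideanSpace ℝ (Fin 2))
    (hA : (0 : ℝ) ≤ inner ℝ (vA' - (vA + (1 / 2 : ℝ) • u)) u)
    (hB : (inner ℝ (vB' - (vB - (1 / 2 : ℝ) • u)) u : ℝ) ≤ 0) :
    (0 : ℝ) ≤ inner ℝ ((vA' - vB') - p) u ∧ vA' - vB' ∉ interior C := by
  have hnu : ‖u‖ = r := by
    rw [hu, ← dist_eq_norm, dist_comm]; exact hd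
  have key : (vA' - vB') - p =
      (vA' - (vA + (1 / 2 : ℝ) • u)) - (vB' - (vB - (1 / 2 : ℝ) • u)) := by
    rw [hu, hx]; module
  have h1 : (0 : ℝ) ≤ inner ℝ ((vA' - vB') - p) u := by
    rw [key, inner_sub_left]; linarith
  refine ⟨h1, ?_⟩
  intro hy
  obtain ⟨ε, hε, hball2⟩ := Metric.isOpen_iff.mp isOpen_interior _ hy
  set y : EuclideanSpace ℝ (Fin 2) := vA' - vB' with hy_def
  set y'' : EuclideanSpace ℝ (Fin 2) := y + (ε / (2 * r)) • u with hy''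
  have hy''C : y'' ∈ interior C := by
    apply hball2
    rw [mem_ball, dist_eq_norm]
    have e1 : y'' - y = (ε / (2 * r)) • u := by rw [hy'']; abel
    have e2 : ‖(ε / (2 * r)) • u‖ = ε / 2 := by
      rw [norm_smul, hnu, Real.norm_eq_abs,
        abs_of_pos (by positivity : (0:ℝ) < ε / (2 * r))]
      field_simp
    rw [e1, e2]; linarith
  set d : EuclideanSpace ℝ (Fin 2) := y'' - x with hd_def
  have huu : (inner ℝ u u : ℝ) = r ^ 2 := by
    rw [real_inner_self_eq_norm_sq, hnu]
  have hs : (inner ℝ u d : ℝ) = inner ℝ (y - p) u + r ^ 2 + (ε / (2 * r)) * r ^ 2 := by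
    have e : d = (y - p) + u + (ε / (2 * r)) • u := by
      rw [hd_def, hy'', hu]; abel
    rw [e, inner_add_right, inner_add_right, inner_smul_right, huu, real_inner_comm]
  clear_value y y'' d
  obtain ⟨s, hs_def⟩ : ∃ s : ℝ, s = (inner ℝ u d : ℝ) := ⟨_, rfl⟩
  have hsr : r ^ 2 + (ε * r / 4) < s := by
    have e3 : (ε / (2 * r)) * r ^ 2 = ε * r / 2 := by field_simp
    rw [hs_def, hs, e3]; nlinarith
  obtain ⟨M, hM⟩ : ∃ M : ℝ, M = ‖d‖ ^ 2 := ⟨_, rfl⟩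
  have hM0 : 0 ≤ M := by rw [hM]; positivity
  have hsr2 : 0 < s - r ^ 2 := by nlinarith
  obtain ⟨t, ht_def⟩ : ∃ t : ℝ, t = min (1 / 2) ((s - r ^ 2) / (M + 1)) := ⟨_, rfl⟩
  have ht0 : 0 < t := by
    rw [ht_def]
    exact lt_min (by norm_num) (div_pos hsr2 (by nlinarith))
  have ht1 : t < 1 := by
    rw [ht_def]
    exact lt_of_le_of_lt (min_le_left _ _) (by norm_num)
  have hkey : t * (M - r ^ 2) < 2 * (s - r ^ 2) := by
    rcases le_or_gt M (r ^ 2) with h | h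
    · have : t * (M - r ^ 2) ≤ 0 := mul_nonpos_of_nonneg_of_nonpos ht0.le (by linarith)
      linarith
    · have h2 : t ≤ (s - r ^ 2) / (M + 1) := by rw [ht_def]; exact min_le_right _ _
      have h3 : t * (M - r ^ 2) ≤ ((s - r ^ 2) / (M + 1)) * (M - r ^ 2) :=
        mul_le_mul_of_nonneg_right h2 (by linarith)
      have h4 : ((s - r ^ 2) / (M + 1)) * (M - r ^ 2) < s - r ^ 2 := by
        rw [div_mul_eq_mul_div, div_lt_iff₀ (by linarith)]
        exact mul_lt_mul_of_pos_left (by linarith [sq_nonneg r]) hsr2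
      linarith
  have hnorm : ‖u - t • d‖ ^ 2 = r ^ 2 - 2 * t * s + t ^ 2 * M := by
    rw [norm_sub_sq_real, inner_smul_right, norm_smul, hnu,
      Real.norm_eq_abs, mul_pow, sq_abs, hM, ← hs_def]
    ring
  have hlt : ‖u - t • d‖ < (1 - t) * r := by
    have hsq : ‖u - t • d‖ ^ 2 < ((1 - t) * r) ^ 2 := by
      rw [hnorm]
      have hpos : (0:ℝ) < t * (2 * (s - r ^ 2) - t * (M - r ^ 2)) :=
        mul_pos ht0 (by linarith)
      have hring : ((1 - t) * r) ^ 2 - (r ^ 2 - 2 * t * s + t ^ 2 * M)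
          = t * (2 * (s - r ^ 2) - t * (M - r ^ 2)) := by ring
      linarith
    exact lt_of_pow_lt_pow_left₀ 2 (mul_nonneg (by linarith) hr.le) hsq
  have h1t : (1 - t) ≠ 0 := by intro h; linarith [h.symm.le]
  set b : EuclideanSpace ℝ (Fin 2) := (1 - t)⁻¹ • (p - t • y'') with hb_def
  have hpb : (1 - t) • b + t • y'' = p := by
    rw [hb_def, smul_inv_smul₀ h1t]; abel
  have hbx : (1 - t) • (b - x) = u - t • d := by
    rw [smul_sub, hb_def, smul_inv_smul₀ h1t, hd_def, hu]
    module
  have hbxn : ‖b - x‖ < r := by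
    have e : ‖(1 - t) • (b - x)‖ = (1 - t) * ‖b - x‖ := by
      rw [norm_smul, Real.norm_eq_abs, abs_of_pos (by linarith : (0:ℝ) < 1 - t)]
    rw [hbx] at e
    have := hlt
    rw [e] at this
    exact (mul_lt_mul_iff_right₀ (by linarith : (0:ℝ) < 1 - t)).mp this
  have hbI : b ∈ interior C := by
    have hsub : ball x r ⊆ interior C :=
      interior_maximal (Set.Subset.trans ball_subset_closedBall hball) isOpen_ball
    exact hsub (by rwa [mem_ball, dist_eq_norm])
  have hpseg : p ∈ openSegment ℝ b y'' :=
    ⟨1 - t, t, by linarith, ht0, by ring, hpb⟩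
  have hpI : p ∈ interior C :=
    hC.openSegment_interior_closure_subset_interior hbI
      (interior_subset_closure hy''C) hpseg
  exact hp.2 hpI
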